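/- Let D be a C*-algebra containing a σ-unital closed two-sided ideal D₀, let q : D → D/D₀ be the quotient map, and let A be a separable C*-algebra. If φ = (φ_t)_{t∈[1,∞)} : A → D/D₀ is a uniformly continuous, equi-continuous asymptotic homomorphism, then there exists a family of maps φ̄_t : A → D, t ∈ [1,∞), such that (i) q ∘ φ̄_t = φ_t for all t; (ii) the family (φ̄_t) is equi-continuous; (iii) t ↦ φ̄_t(a) is uniformly continuous for all a ∈ A; (iv) sup_{t∈[1,∞)} ‖φ̄_t(a)‖ < ∞ for all a ∈ A. -/

import Mathlib

open Filter Topology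

open Set



section Helpers

variable {α ι : Type*} [UniformSpace α] {S : Set α}

lemma MTaux_ucOn_sum {E : Type*} [AddCommGroup E] [UniformSpace E] [IsUniformAddGroup E]
    (s : Finset ι) (f : ι → α → E) (h : ∀ i ∈ s, UniformContinuousOn (f i) S) :
    UniformContinuousOn (fun t => ∑ i ∈ s, f i t) S := by
  classical
  induction s using Finset.induction_on with
  | empty => rw [uniformContinuousOn_iff_restrict]; exact uniformContinuous_const
  | insert a s' hx ih =>
    have h1 : UniformContinuousOn (f a) S := h a (Finset.mem_insert_self a s')
    have h2 : UniformContinuousOn (fun t => ∑ i ∈ s', f i t) S :=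
      ih (fun i hi => h i (Finset.mem_insert_of_mem hi))
    rw [uniformContinuousOn_iff_restrict] at h1 h2 ⊢
    have : S.restrict (fun t => ∑ i ∈ insert a s', f i t)
        = fun u => S.restrict (f a) u + S.restrict (fun t => ∑ i ∈ s', f i t) u := by
      funext u
      simp [Finset.sum_insert hx, Set.restrict]
    change UniformContinuous (S.restrict (fun t => ∑ i ∈ insert a s', f i t))
    rw [this]
    exact h1.add h2

lemma MTaux_ucOn_smul {E : Type*} [NormedAddCommGroup E] [NormedSpace ℂ E]
    (c : ℂ) (f : α → E) (h : UniformContinuousOn f S) :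
    UniformContinuousOn (fun t => c • f t) S := by
  rw [uniformContinuousOn_iff_restrict] at h ⊢
  exact h.const_smul c

lemma MTaux_ucOn_comp_clm {E F : Type*} [NormedAddCommGroup E] [NormedSpace ℂ E]
    [NormedAddCommGroup F] [NormedSpace ℂ F] (L : E →L[ℂ] F)
    (f : α → E) (h : UniformContinuousOn f S) :
    UniformContinuousOn (fun t => L (f t)) S := by
  rw [uniformContinuousOn_iff_restrict] at h ⊢
  exact L.uniformContinuous.comp h

lemma MTaux_ucOn_sub {E : Type*} [NormedAddCommGroup E]
    (f g : α → E) (hf : UniformContinuousOn f S) (hg : UniformContinuousOn g S) :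
    UniformContinuousOn (fun t => f t - g t) S := by
  rw [uniformContinuousOn_iff_restrict] at hf hg ⊢
  exact hf.sub hg

lemma MTaux_finset_delta (s : Finset ι) (Q : ι → ℝ → Prop)
    (h : ∀ i ∈ s, ∃ δ > 0, Q i δ)
    (mono : ∀ i ∈ s, ∀ δ δ', 0 < δ' → δ' ≤ δ → Q i δ → Q i δ') :
    ∃ δ > 0, ∀ i ∈ s, Q i δ := by
  classical
  induction s using Finset.induction_on with
  | empty => exact ⟨1, one_pos, by simp⟩
  | insert a s' hx ih =>
    obtain ⟨δ₁, hδ₁, hQ₁⟩ := h a (Finset.mem_insert_self a s')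
    obtain ⟨δ₂, hδ₂, hQ₂⟩ := ih (fun i hi => h i (Finset.mem_insert_of_mem hi))
      (fun i hi => mono i (Finset.mem_insert_of_mem hi))
    refine ⟨min δ₁ δ₂, lt_min hδ₁ hδ₂, ?_⟩
    intro i hi
    rcases Finset.mem_insert.1 hi with rfl | hi'
    · exact mono i hi δ₁ _ (lt_min hδ₁ hδ₂) (min_le_left _ _) hQ₁
    · exact mono i hi δ₂ _ (lt_min hδ₁ hδ₂) (min_le_right _ _) (hQ₂ i hi')

end Helpers


lemma MTaux_exists_pl_lift {D C : Type*} [NormedAddCommGroup D] [NormedSpace ℂ D]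
    [NormedAddCommGroup C] [NormedSpace ℂ C]
    (qL : D →L[ℂ] C) (K : ℝ) (hK0 : 0 ≤ K)
    (hK : ∀ c : C, ∃ d : D, qL d = c ∧ ‖d‖ ≤ K * ‖c‖)
    (h : ℝ → C) (hUC : UniformContinuousOn h (Set.Ici 1))
    (β : ℝ) (hβ : ∀ t ∈ Set.Ici (1:ℝ), ‖h t‖ ≤ β)
    (ε : ℝ) (hε : 0 < ε) :
    ∃ g : ℝ → D, UniformContinuousOn g (Set.Ici 1) ∧
      (∀ β' : ℝ, (∀ t ∈ Set.Ici (1:ℝ), ‖h t‖ ≤ β') → ∀ t ∈ Set.Ici (1:ℝ), ‖g t‖ ≤ K * β') ∧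
      (∀ t ∈ Set.Ici (1:ℝ), ‖qL (g t) - h t‖ ≤ ε) := by
  have hβ0 : 0 ≤ β := le_trans (norm_nonneg _) (hβ 1 (Set.mem_Ici.2 (le_refl 1)))
  obtain ⟨δ, hδ, hδ'⟩ := (Metric.uniformContinuousOn_iff).1 hUC ε hε
  set η : ℝ := δ / 2 with hηdef
  have hηpos : 0 < η := by positivity
  have hηδ : η < δ := by rw [hηdef]; linarith
  set s : ℕ → ℝ := fun k => 1 + k * η with hsdef
  have hsI : ∀ k, s k ∈ Set.Ici (1:ℝ) := by
    intro k; simp only [hsdef, Set.mem_Ici, le_add_iff_nonneg_right]; positivity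
  choose d hd hdnorm using fun k => hK (h (s k))
  set kk : ℝ → ℕ := fun t => ⌊(t - 1) / η⌋₊ with hkkdef
  set μ : ℝ → ℝ := fun t => (t - 1 - kk t * η) / η with hμdef
  set g : ℝ → D := fun t =>
    ((1 - μ t : ℝ) : ℂ) • d (kk t) + ((μ t : ℝ) : ℂ) • d (kk t + 1) with hgdef
  -- floor facts
  have hfloor1 : ∀ t : ℝ, t ∈ Set.Ici (1:ℝ) → (kk t : ℝ) * η ≤ t - 1 := by
    intro t ht
    have h0 : (0:ℝ) ≤ (t - 1) / η := by
      apply div_nonneg _ hηpos.le; simp only [Set.mem_Ici] at ht; linarith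
    have := Nat.floor_le h0
    rw [le_div_iff₀ hηpos] at this
    simpa [hkkdef] using this
  have hfloor2 : ∀ t : ℝ, t - 1 < ((kk t : ℝ) + 1) * η := by
    intro t
    have := Nat.lt_floor_add_one ((t - 1) / η)
    rw [div_lt_iff₀ hηpos] at this
    simpa [hkkdef] using this
  have hμ0 : ∀ t, t ∈ Set.Ici (1:ℝ) → 0 ≤ μ t := by
    intro t ht
    apply div_nonneg _ hηpos.le
    have := hfloor1 t ht; linarith
  have hμ1 : ∀ t : ℝ, μ t ≤ 1 := by
    intro t
    rw [hμdef, div_le_one hηpos]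
    have := hfloor2 t; push_cast at this ⊢; linarith
  -- pointwise norm bound
  have hnorm : ∀ β' : ℝ, (∀ t ∈ Set.Ici (1:ℝ), ‖h t‖ ≤ β') →
      ∀ t ∈ Set.Ici (1:ℝ), ‖g t‖ ≤ K * β' := by
    intro β' hβ' t ht
    have hd1 : ‖d (kk t)‖ ≤ K * β' :=
      le_trans (hdnorm (kk t)) (mul_le_mul_of_nonneg_left (hβ' _ (hsI _)) hK0)
    have hd2 : ‖d (kk t + 1)‖ ≤ K * β' :=
      le_trans (hdnorm (kk t + 1)) (mul_le_mul_of_nonneg_left (hβ' _ (hsI _)) hK0)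
    have hμt0 := hμ0 t ht
    have hμt1 := hμ1 t
    calc ‖g t‖ ≤ ‖((1 - μ t : ℝ) : ℂ) • d (kk t)‖ + ‖((μ t : ℝ) : ℂ) • d (kk t + 1)‖ :=
          norm_add_le _ _
      _ = (1 - μ t) * ‖d (kk t)‖ + μ t * ‖d (kk t + 1)‖ := by
          rw [norm_smul, norm_smul, Complex.norm_real, Complex.norm_real,
            Real.norm_eq_abs, Real.norm_eq_abs, abs_of_nonneg (by linarith),
            abs_of_nonneg hμt0]
      _ ≤ (1 - μ t) * (K * β') + μ t * (K * β') := by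
          gcongr <;> linarith
      _ = K * β' := by ring
  -- defect bound
  have hdist1 : ∀ t, t ∈ Set.Ici (1:ℝ) → dist (s (kk t)) t < δ := by
    intro t ht
    have h1 := hfloor1 t ht
    have h2 := hfloor2 t
    rw [Real.dist_eq, abs_of_nonpos (by simp only [hsdef]; linarith)]
    simp only [hsdef]
    push_cast at h2 ⊢
    linarith
  have hdist2 : ∀ t, t ∈ Set.Ici (1:ℝ) → dist (s (kk t + 1)) t < δ := by
    intro t ht
    have h1 := hfloor1 t ht
    have h2 := hfloor2 t
    rw [Real.dist_eq, abs_of_nonneg (by simp only [hsdef]; push_cast; linarith)]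
    simp only [hsdef]
    push_cast
    linarith
  have hdefect : ∀ t ∈ Set.Ici (1:ℝ), ‖qL (g t) - h t‖ ≤ ε := by
    intro t ht
    have hμt0 := hμ0 t ht
    have hμt1 := hμ1 t
    have e1 : qL (g t) = ((1 - μ t : ℝ) : ℂ) • h (s (kk t))
        + ((μ t : ℝ) : ℂ) • h (s (kk t + 1)) := by
      simp only [hgdef, map_add, map_smul, hd]
    have hone : ((1 - μ t : ℝ) : ℂ) + ((μ t : ℝ) : ℂ) = 1 := by push_cast; ring
    have e2 : qL (g t) - h t = ((1 - μ t : ℝ) : ℂ) • (h (s (kk t)) - h t)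
        + ((μ t : ℝ) : ℂ) • (h (s (kk t + 1)) - h t) := by
      calc qL (g t) - h t
          = ((1 - μ t : ℝ) : ℂ) • h (s (kk t)) + ((μ t : ℝ) : ℂ) • h (s (kk t + 1))
            - ((((1 - μ t : ℝ) : ℂ) + ((μ t : ℝ) : ℂ)) • h t) := by
            rw [e1, hone, one_smul]
        _ = _ := by rw [add_smul]; simp only [smul_sub]; abel
    have n1 : ‖h (s (kk t)) - h t‖ ≤ ε := by
      rw [← dist_eq_norm]
      exact le_of_lt (hδ' _ (hsI _) _ ht (hdist1 t ht))
    have n2 : ‖h (s (kk t + 1)) - h t‖ ≤ ε := by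
      rw [← dist_eq_norm]
      exact le_of_lt (hδ' _ (hsI _) _ ht (hdist2 t ht))
    calc ‖qL (g t) - h t‖
        ≤ ‖((1 - μ t : ℝ) : ℂ) • (h (s (kk t)) - h t)‖
          + ‖((μ t : ℝ) : ℂ) • (h (s (kk t + 1)) - h t)‖ := by rw [e2]; exact norm_add_le _ _
      _ = (1 - μ t) * ‖h (s (kk t)) - h t‖ + μ t * ‖h (s (kk t + 1)) - h t‖ := by
          rw [norm_smul, norm_smul, Complex.norm_real, Complex.norm_real,
            Real.norm_eq_abs, Real.norm_eq_abs, abs_of_nonneg (by linarith),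
            abs_of_nonneg hμt0]
      _ ≤ (1 - μ t) * ε + μ t * ε := by gcongr <;> linarith
      _ = ε := by ring
  -- uniform continuity
  set L : ℝ := 2 * (K * β) + 1 with hLdef
  have hLpos : 0 < L := by
    have : 0 ≤ K * β := mul_nonneg hK0 hβ0
    rw [hLdef]; linarith
  have hdb : ∀ k, ‖d k‖ ≤ K * β := fun k =>
    le_trans (hdnorm k) (mul_le_mul_of_nonneg_left (hβ _ (hsI _)) hK0)
  have hddiff : ∀ k l : ℕ, ‖d k - d l‖ ≤ L := by
    intro k l
    calc ‖d k - d l‖ ≤ ‖d k‖ + ‖d l‖ := norm_sub_le _ _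
      _ ≤ K * β + K * β := add_le_add (hdb k) (hdb l)
      _ ≤ L := by rw [hLdef]; linarith
  have samecell : ∀ t u : ℝ, t ∈ Set.Ici (1:ℝ) → u ∈ Set.Ici (1:ℝ) → kk t = kk u → t ≤ u →
      ‖g u - g t‖ ≤ L / η * (u - t) := by
    intro t u ht hu hk htu
    have e : g u - g t = ((μ u - μ t : ℝ) : ℂ) • (d (kk t + 1) - d (kk t)) := by
      simp only [hgdef, hk]
      push_cast
      module
    have eμ : μ u - μ t = (u - t) / η := by
      simp only [hμdef, hk]; field_simp; ring
    have hut : 0 ≤ (u - t) / η := div_nonneg (sub_nonneg.2 htu) hηpos.le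
    rw [e, norm_smul, Complex.norm_real, Real.norm_eq_abs, eμ, abs_of_nonneg hut]
    calc (u - t) / η * ‖d (kk t + 1) - d (kk t)‖ ≤ (u - t) / η * L :=
          mul_le_mul_of_nonneg_left (hddiff _ _) hut
      _ = L / η * (u - t) := by ring
  have key : ∀ t u : ℝ, t ∈ Set.Ici (1:ℝ) → u ∈ Set.Ici (1:ℝ) → t ≤ u → u - t < η →
      ‖g u - g t‖ ≤ L / η * (u - t) := by
    intro t u ht hu htu hclose
    have hk1 : kk t ≤ kk u := by
      exact Nat.floor_mono (by gcongr <;> linarith)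
    have hk2 : kk u ≤ kk t + 1 := by
      have h2 := hfloor2 t
      have h0 : (0:ℝ) ≤ (u - 1) / η := by
        apply div_nonneg _ hηpos.le; simp only [Set.mem_Ici] at hu; linarith
      have : (u - 1) / η < (kk t : ℝ) + 2 := by
        rw [div_lt_iff₀ hηpos]; push_cast at h2 ⊢; nlinarith [hηpos]
      have hfl : kk u < kk t + 2 := by
        have := Nat.floor_lt h0 |>.2 (by exact_mod_cast this)
        simpa [hkkdef] using this
      omega
    rcases Nat.eq_or_lt_of_le hk1 with heq | hlt
    · exact samecell t u ht hu heq htu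
    · have hsucc : kk u = kk t + 1 := by omega
      set b : ℝ := s (kk u) with hbdef
      have hbI : b ∈ Set.Ici (1:ℝ) := hsI _
      have hkb : kk b = kk u := by
        have : (b - 1) / η = (kk u : ℝ) := by
          simp only [hbdef, hsdef]; field_simp; ring
        simp only [hkkdef, this, Nat.floor_natCast]
      have hμb : μ b = 0 := by
        simp only [hμdef, hkb]
        have : b - 1 - (kk u : ℝ) * η = 0 := by simp only [hbdef, hsdef]; ring
        rw [this, zero_div]
      have hgb : g b = d (kk u) := by
        simp only [hgdef, hkb, hμb]
        push_cast
        simp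
      have htb : t ≤ b := by
        have h2 := hfloor2 t
        simp only [hbdef, hsdef, hsucc]
        push_cast at h2 ⊢
        linarith
      have hbu : b ≤ u := by
        have h1 := hfloor1 u hu
        simp only [hbdef, hsdef]
        linarith
      have piece1 : ‖g b - g t‖ ≤ L / η * (b - t) := by
        have e : g b - g t = ((1 - μ t : ℝ) : ℂ) • (d (kk t + 1) - d (kk t)) := by
          rw [hgb, hsucc]
          simp only [hgdef]
          push_cast
          module
        have e1μ : 1 - μ t = (b - t) / η := by
          simp only [hμdef, hbdef, hsdef, hsucc]
          field_simp
          push_cast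
          ring
        have hbt : 0 ≤ (b - t) / η := div_nonneg (sub_nonneg.2 htb) hηpos.le
        rw [e, norm_smul, Complex.norm_real, Real.norm_eq_abs, e1μ, abs_of_nonneg hbt]
        calc (b - t) / η * ‖d (kk t + 1) - d (kk t)‖ ≤ (b - t) / η * L :=
              mul_le_mul_of_nonneg_left (hddiff _ _) hbt
          _ = L / η * (b - t) := by ring
      have piece2 : ‖g u - g b‖ ≤ L / η * (u - b) := samecell b u hbI hu hkb hbu
      calc ‖g u - g t‖ ≤ ‖g u - g b‖ + ‖g b - g t‖ := by
            have : g u - g t = (g u - g b) + (g b - g t) := by abel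
            rw [this]; exact norm_add_le _ _
        _ ≤ L / η * (u - b) + L / η * (b - t) := add_le_add piece2 piece1
        _ = L / η * (u - t) := by ring
  refine ⟨g, ?_, hnorm, hdefect⟩
  rw [Metric.uniformContinuousOn_iff]
  intro ε' hε'
  refine ⟨min η (ε' * η / L), lt_min hηpos (by positivity), ?_⟩
  intro x hx y hy hxy
  have main : ∀ t u : ℝ, t ∈ Set.Ici (1:ℝ) → u ∈ Set.Ici (1:ℝ) → t ≤ u →
      u - t < min η (ε' * η / L) → dist (g t) (g u) < ε' := by
    intro t u ht hu htu hlt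
    have h1 : u - t < η := lt_of_lt_of_le hlt (min_le_left _ _)
    have h2 : u - t < ε' * η / L := lt_of_lt_of_le hlt (min_le_right _ _)
    have := key t u ht hu htu h1
    rw [dist_eq_norm, norm_sub_rev]
    calc ‖g u - g t‖ ≤ L / η * (u - t) := this
      _ < L / η * (ε' * η / L) := by
          apply mul_lt_mul_of_pos_left h2 (by positivity)
      _ = ε' := by field_simp
  rcases le_total x y with hle | hle
  · have : y - x < min η (ε' * η / L) := by
      rw [Real.dist_eq] at hxy
      have := le_abs_self (x - y)
      have := neg_abs_le (x - y)
      linarith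
    exact main x y hx hy hle this
  · have : x - y < min η (ε' * η / L) := by
      rw [Real.dist_eq] at hxy
      have := le_abs_self (x - y)
      linarith
    rw [dist_comm]
    exact main y x hy hx hle this

lemma MTaux_step {A D C : Type*} [MetricSpace A]
    [NormedAddCommGroup D] [NormedSpace ℂ D] [NormedAddCommGroup C] [NormedSpace ℂ C]
    (qL : D →L[ℂ] C) (K : ℝ) (hK0 : 0 ≤ K)
    (hK : ∀ c : C, ∃ d : D, qL d = c ∧ ‖d‖ ≤ K * ‖c‖)
    (hPL : ∀ (h : ℝ → C), UniformContinuousOn h (Set.Ici 1) →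
      ∀ β : ℝ, (∀ t ∈ Set.Ici (1:ℝ), ‖h t‖ ≤ β) → ∀ ε : ℝ, 0 < ε →
      ∃ g : ℝ → D, UniformContinuousOn g (Set.Ici 1) ∧
        (∀ β' : ℝ, (∀ t ∈ Set.Ici (1:ℝ), ‖h t‖ ≤ β') → ∀ t ∈ Set.Ici (1:ℝ), ‖g t‖ ≤ K * β') ∧
        (∀ t ∈ Set.Ici (1:ℝ), ‖qL (g t) - h t‖ ≤ ε))
    (F : A → ℝ → C)
    (hUC : ∀ a, UniformContinuousOn (F a) (Set.Ici 1))
    (hEq : ∀ a : A, ∀ ε > (0:ℝ), ∃ δ > (0:ℝ), ∀ b, dist b a < δ →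
      ∀ t ∈ Set.Ici (1:ℝ), ‖F b t - F a t‖ ≤ ε)
    (hBd : ∀ a, ∃ B : ℝ, ∀ t ∈ Set.Ici (1:ℝ), ‖F a t‖ ≤ B)
    (ε : ℝ) (hε : 0 < ε) :
    ∃ G : A → ℝ → D,
      (∀ a, UniformContinuousOn (G a) (Set.Ici 1)) ∧
      (∀ a : A, ∀ ε' > (0:ℝ), ∃ δ > (0:ℝ), ∀ b, dist b a < δ →
        ∀ t ∈ Set.Ici (1:ℝ), ‖G b t - G a t‖ ≤ ε') ∧
      (∀ a, ∀ t ∈ Set.Ici (1:ℝ), ‖qL (G a t) - F a t‖ ≤ 2 * ε) ∧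
      (∀ a, ∀ B : ℝ, (∀ t ∈ Set.Ici (1:ℝ), ‖F a t‖ ≤ B) →
        ∀ t ∈ Set.Ici (1:ℝ), ‖G a t‖ ≤ K * (B + ε)) := by
  classical
  choose δa hδa hδa' using fun a => hEq a ε hε
  set U : A → Set A := fun a => Metric.ball a (δa a) with hUdef
  have hUo : ∀ a, IsOpen (U a) := fun a => Metric.isOpen_ball
  have hUcov : (Set.univ : Set A) ⊆ ⋃ a, U a := by
    intro a _
    exact Set.mem_iUnion.2 ⟨a, Metric.mem_ball_self (hδa a)⟩
  obtain ⟨ρ, hρ⟩ := PartitionOfUnity.exists_isSubordinate isClosed_univ U hUo hUcov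
  choose B hB using hBd
  have hB0 : ∀ x, 0 ≤ B x := fun x =>
    le_trans (norm_nonneg _) (hB x 1 (Set.mem_Ici.2 (le_refl 1)))
  choose g hgUC hgN hgD using fun x => hPL (F x) (hUC x) (B x) (hB x) ε hε
  -- the key fact from subordination
  have hsupp : ∀ x b : A, ρ x b ≠ 0 → ∀ t ∈ Set.Ici (1:ℝ), ‖F b t - F x t‖ ≤ ε := by
    intro x b hxb t ht
    have hb : b ∈ U x := hρ x (subset_closure (by simpa [Function.mem_support] using hxb))
    exact hδa' x b (Metric.mem_ball.1 hb) t ht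
  set G : A → ℝ → D := fun a t => ∑ᶠ x, ((ρ x a : ℝ) : ℂ) • g x t with hGdef
  have hloc : ∀ a : A, ∃ (I : Finset A) (V : Set A), V ∈ 𝓝 a ∧ a ∈ V ∧
      ∀ b ∈ V, (∑ x ∈ I, ρ x b = 1) ∧
        ∀ t, G b t = ∑ x ∈ I, ((ρ x b : ℝ) : ℂ) • g x t := by
    intro a
    obtain ⟨I, hI⟩ := ρ.exists_finset_nhds a
    refine ⟨I, {b | (∑ x ∈ I, ρ x b = 1) ∧ Function.support (fun x => ρ x b) ⊆ I},
      hI, mem_of_mem_nhds hI, ?_⟩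
    rintro b ⟨hb1, hb2⟩
    refine ⟨hb1, fun t => ?_⟩
    apply finsum_eq_sum_of_support_subset
    intro x hx
    apply hb2
    simp only [Function.mem_support] at hx ⊢
    intro h0
    exact hx (by rw [h0]; push_cast; simp)
  refine ⟨G, ?_, ?_, ?_, ?_⟩
  -- uniform continuity in t
  · intro a
    obtain ⟨I, V, hV, haV, hrep⟩ := hloc a
    have : G a = fun t => ∑ x ∈ I, ((ρ x a : ℝ) : ℂ) • g x t := funext ((hrep a haV).2)
    rw [this]
    exact MTaux_ucOn_sum I _ (fun x _ => MTaux_ucOn_smul _ _ (hgUC x))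
  -- equicontinuity in a
  · intro a ε' hε'
    obtain ⟨I, V, hV, haV, hrep⟩ := hloc a
    set w : A → ℝ := fun b => ∑ x ∈ I, |ρ x b - ρ x a| * (K * B x + 1) with hwdef
    have hwcont : Continuous w := by
      apply continuous_finset_sum
      intro x _
      exact (((ρ x).continuous.sub continuous_const).abs).mul continuous_const
    have hw0 : w a = 0 := by simp [hwdef]
    have hev : ∀ᶠ b in 𝓝 a, w b < ε' := by
      have := hwcont.continuousAt (x := a)
      rw [ContinuousAt, hw0] at this
      exact this.eventually_lt_const hε'
    obtain ⟨δ, hδpos, hδball⟩ := Metric.mem_nhds_iff.1 (Filter.inter_mem hV hev)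
    refine ⟨δ, hδpos, ?_⟩
    intro b hb t ht
    obtain ⟨hbV, hbw⟩ := hδball (Metric.mem_ball.2 (by rwa [dist_comm] at hb ⊢))
    have hga := (hrep a haV).2 t
    have hgb := (hrep b hbV).2 t
    have hdiff : G b t - G a t = ∑ x ∈ I, ((ρ x b - ρ x a : ℝ) : ℂ) • g x t := by
      rw [hga, hgb, ← Finset.sum_sub_distrib]
      congr 1
      funext x
      rw [← sub_smul]
      norm_cast
    rw [hdiff]
    calc ‖∑ x ∈ I, ((ρ x b - ρ x a : ℝ) : ℂ) • g x t‖
        ≤ ∑ x ∈ I, ‖((ρ x b - ρ x a : ℝ) : ℂ) • g x t‖ := norm_sum_le _ _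
      _ ≤ ∑ x ∈ I, |ρ x b - ρ x a| * (K * B x + 1) := by
          apply Finset.sum_le_sum
          intro x _
          rw [norm_smul, Complex.norm_real, Real.norm_eq_abs]
          apply mul_le_mul_of_nonneg_left _ (abs_nonneg _)
          calc ‖g x t‖ ≤ K * B x := hgN x (B x) (hB x) t ht
            _ ≤ K * B x + 1 := by linarith
      _ = w b := rfl
      _ ≤ ε' := le_of_lt hbw
  -- defect
  · intro a t ht
    obtain ⟨I, V, hV, haV, hrep⟩ := hloc a
    have h1 := (hrep a haV).1
    rw [(hrep a haV).2 t, map_sum]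
    have hFa : F a t = ∑ x ∈ I, ((ρ x a : ℝ) : ℂ) • F a t := by
      rw [← Finset.sum_smul]
      have : (∑ x ∈ I, ((ρ x a : ℝ) : ℂ)) = 1 := by
        rw [← Complex.ofReal_sum, h1, Complex.ofReal_one]
      rw [this, one_smul]
    have : (∑ x ∈ I, qL (((ρ x a : ℝ) : ℂ) • g x t)) - F a t
        = ∑ x ∈ I, ((ρ x a : ℝ) : ℂ) • (qL (g x t) - F a t) := by
      conv_lhs => rw [hFa]
      rw [← Finset.sum_sub_distrib]
      congr 1
      funext x
      rw [map_smul, smul_sub]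
    rw [this]
    calc ‖∑ x ∈ I, ((ρ x a : ℝ) : ℂ) • (qL (g x t) - F a t)‖
        ≤ ∑ x ∈ I, ‖((ρ x a : ℝ) : ℂ) • (qL (g x t) - F a t)‖ := norm_sum_le _ _
      _ ≤ ∑ x ∈ I, ρ x a * (2 * ε) := by
          apply Finset.sum_le_sum
          intro x _
          rw [norm_smul, Complex.norm_real, Real.norm_eq_abs, abs_of_nonneg (ρ.nonneg x a)]
          rcases eq_or_ne (ρ x a) 0 with h0 | h0
          · rw [h0]; simp
          · apply mul_le_mul_of_nonneg_left _ (ρ.nonneg x a)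
            calc ‖qL (g x t) - F a t‖
                ≤ ‖qL (g x t) - F x t‖ + ‖F x t - F a t‖ := by
                  have : qL (g x t) - F a t = (qL (g x t) - F x t) + (F x t - F a t) := by abel
                  rw [this]; exact norm_add_le _ _
              _ ≤ ε + ε := by
                  apply add_le_add (hgD x t ht)
                  rw [norm_sub_rev]
                  exact hsupp x a h0 t ht
              _ = 2 * ε := by ring
      _ = (∑ x ∈ I, ρ x a) * (2 * ε) := by rw [Finset.sum_mul]
      _ = 2 * ε := by rw [h1, one_mul]
  -- norm bound
  · intro a B' hB' t ht
    obtain ⟨I, V, hV, haV, hrep⟩ := hloc a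
    have h1 := (hrep a haV).1
    rw [(hrep a haV).2 t]
    calc ‖∑ x ∈ I, ((ρ x a : ℝ) : ℂ) • g x t‖
        ≤ ∑ x ∈ I, ‖((ρ x a : ℝ) : ℂ) • g x t‖ := norm_sum_le _ _
      _ ≤ ∑ x ∈ I, ρ x a * (K * (B' + ε)) := by
          apply Finset.sum_le_sum
          intro x _
          rw [norm_smul, Complex.norm_real, Real.norm_eq_abs, abs_of_nonneg (ρ.nonneg x a)]
          rcases eq_or_ne (ρ x a) 0 with h0 | h0
          · rw [h0]; simp
          · apply mul_le_mul_of_nonneg_left _ (ρ.nonneg x a)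
            apply hgN x (B' + ε) _ t ht
            intro s hs
            have e : F x s = F a s + (F x s - F a s) := by abel
            calc ‖F x s‖ ≤ ‖F a s‖ + ‖F x s - F a s‖ := by
                  conv_lhs => rw [e]
                  exact norm_add_le _ _
              _ ≤ B' + ε := by
                  apply add_le_add (hB' s hs)
                  rw [norm_sub_rev]
                  exact hsupp x a h0 s hs
      _ = (∑ x ∈ I, ρ x a) * (K * (B' + ε)) := by rw [Finset.sum_mul]
      _ = K * (B' + ε) := by rw [h1, one_mul]

theorem MTaux_main {A D C : Type*} [MetricSpace A]
    [NormedAddCommGroup D] [NormedSpace ℂ D] [CompleteSpace D]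
    [NormedAddCommGroup C] [NormedSpace ℂ C]
    (qL : D →L[ℂ] C) (K : ℝ) (hKpos : 0 < K)
    (hK : ∀ c : C, ∃ d : D, qL d = c ∧ ‖d‖ ≤ K * ‖c‖)
    (F₀ : A → ℝ → C)
    (h1 : ∀ a, UniformContinuousOn (F₀ a) (Set.Ici 1))
    (h2 : ∀ a : A, ∀ ε > (0:ℝ), ∃ δ > (0:ℝ), ∀ b, dist b a < δ →
      ∀ t ∈ Set.Ici (1:ℝ), ‖F₀ b t - F₀ a t‖ ≤ ε)
    (h3 : ∀ a, ∃ B : ℝ, ∀ t ∈ Set.Ici (1:ℝ), ‖F₀ a t‖ ≤ B) :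
    ∃ φbar : ℝ → A → D,
      (∀ t ∈ Set.Ici (1:ℝ), ∀ a, qL (φbar t a) = F₀ a t) ∧
      (∀ a : A, ∀ ε > (0:ℝ), ∃ δ > (0:ℝ), ∀ b, dist b a < δ →
        ∀ t ∈ Set.Ici (1:ℝ), ‖φbar t b - φbar t a‖ ≤ ε) ∧
      (∀ a, UniformContinuousOn (fun t => φbar t a) (Set.Ici 1)) ∧
      (∀ a, ∃ M : ℝ, ∀ t ∈ Set.Ici (1:ℝ), ‖φbar t a‖ ≤ M) := by
  classical
  have hPL := fun h hUC β hβ ε hε => MTaux_exists_pl_lift qL K hKpos.le hK h hUC β hβ ε hε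
  -- the iteration
  let Pkg := {F : A → ℝ → C //
    (∀ a, UniformContinuousOn (F a) (Set.Ici 1)) ∧
    (∀ a : A, ∀ ε > (0:ℝ), ∃ δ > (0:ℝ), ∀ b, dist b a < δ →
      ∀ t ∈ Set.Ici (1:ℝ), ‖F b t - F a t‖ ≤ ε) ∧
    (∀ a, ∃ B : ℝ, ∀ t ∈ Set.Ici (1:ℝ), ‖F a t‖ ≤ B)}
  have step : ∀ (p : Pkg) (m : ℕ), ∃ G : A → ℝ → D,
      (∀ a, UniformContinuousOn (G a) (Set.Ici 1)) ∧
      (∀ a : A, ∀ ε' > (0:ℝ), ∃ δ > (0:ℝ), ∀ b, dist b a < δ →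
        ∀ t ∈ Set.Ici (1:ℝ), ‖G b t - G a t‖ ≤ ε') ∧
      (∀ a, ∀ t ∈ Set.Ici (1:ℝ), ‖qL (G a t) - p.1 a t‖ ≤ 2 * (1/2)^m) ∧
      (∀ a, ∀ B : ℝ, (∀ t ∈ Set.Ici (1:ℝ), ‖p.1 a t‖ ≤ B) →
        ∀ t ∈ Set.Ici (1:ℝ), ‖G a t‖ ≤ K * (B + (1/2)^m)) :=
    fun p m => MTaux_step qL K hKpos.le hK hPL p.1 p.2.1 p.2.2.1 p.2.2.2
      ((1/2)^m) (by positivity)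
  choose Gf hGf1 hGf2 hGf3 hGf4 using step
  have hnext : ∀ (p : Pkg) (m : ℕ),
      (∀ a, UniformContinuousOn (fun t => p.1 a t - qL (Gf p m a t)) (Set.Ici 1)) ∧
      (∀ a : A, ∀ ε > (0:ℝ), ∃ δ > (0:ℝ), ∀ b, dist b a < δ → ∀ t ∈ Set.Ici (1:ℝ),
        ‖(p.1 b t - qL (Gf p m b t)) - (p.1 a t - qL (Gf p m a t))‖ ≤ ε) ∧
      (∀ a, ∃ B : ℝ, ∀ t ∈ Set.Ici (1:ℝ), ‖p.1 a t - qL (Gf p m a t)‖ ≤ B) := by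
    intro p m
    refine ⟨fun a => MTaux_ucOn_sub _ _ (p.2.1 a)
      (MTaux_ucOn_comp_clm qL _ (hGf1 p m a)), ?_, ?_⟩
    · intro a ε hε
      obtain ⟨δ₁, hδ₁, hδ₁'⟩ := p.2.2.1 a (ε/2) (by positivity)
      obtain ⟨δ₂, hδ₂, hδ₂'⟩ := hGf2 p m a (ε/(2*(‖qL‖+1))) (by positivity)
      refine ⟨min δ₁ δ₂, lt_min hδ₁ hδ₂, ?_⟩
      intro b hb t ht
      have e : (p.1 b t - qL (Gf p m b t)) - (p.1 a t - qL (Gf p m a t))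
          = (p.1 b t - p.1 a t) - qL (Gf p m b t - Gf p m a t) := by
        rw [map_sub]; abel
      rw [e]
      have hq : ‖qL (Gf p m b t - Gf p m a t)‖ ≤ ε/2 := by
        calc ‖qL (Gf p m b t - Gf p m a t)‖ ≤ ‖qL‖ * ‖Gf p m b t - Gf p m a t‖ :=
              qL.le_opNorm _
          _ ≤ ‖qL‖ * (ε/(2*(‖qL‖+1))) := by
              apply mul_le_mul_of_nonneg_left _ (norm_nonneg qL)
              exact hδ₂' b (lt_of_lt_of_le hb (min_le_right _ _)) t ht
          _ ≤ (‖qL‖+1) * (ε/(2*(‖qL‖+1))) := by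
              have h0 : (0:ℝ) ≤ ‖qL‖ := norm_nonneg qL
              gcongr
              linarith
          _ = ε/2 := by
              have h0 : (0:ℝ) ≤ ‖qL‖ := norm_nonneg qL
              have hne : (‖qL‖ + 1) ≠ 0 := by linarith
              field_simp
      calc ‖(p.1 b t - p.1 a t) - qL (Gf p m b t - Gf p m a t)‖
          ≤ ‖p.1 b t - p.1 a t‖ + ‖qL (Gf p m b t - Gf p m a t)‖ := norm_sub_le _ _
        _ ≤ ε/2 + ε/2 :=
            add_le_add (hδ₁' b (lt_of_lt_of_le hb (min_le_left _ _)) t ht) hq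
        _ = ε := by ring
    · intro a
      refine ⟨2 * (1/2)^m, fun t ht => ?_⟩
      rw [norm_sub_rev]
      exact hGf3 p m a t ht
  let nextP : Pkg → ℕ → Pkg := fun p m => ⟨fun a t => p.1 a t - qL (Gf p m a t), hnext p m⟩
  let p0 : Pkg := ⟨F₀, h1, h2, h3⟩
  obtain ⟨seq, hseq0, hseqS⟩ :
      ∃ seq : ℕ → Pkg, seq 0 = p0 ∧ ∀ m, seq (m+1) = nextP (seq m) m :=
    ⟨fun m => Nat.rec p0 (fun m ih => nextP ih m) m, rfl, fun m => rfl⟩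
  set Fm : ℕ → A → ℝ → C := fun m => (seq m).1 with hFm
  set Gm : ℕ → A → ℝ → D := fun m => Gf (seq m) m with hGm
  have hF0 : Fm 0 = F₀ := by
    show (seq 0).1 = F₀
    rw [hseq0]
  have hFrec : ∀ m a t, Fm (m+1) a t = Fm m a t - qL (Gm m a t) := by
    intro m a t
    show (seq (m+1)).1 a t = (seq m).1 a t - qL (Gf (seq m) m a t)
    rw [hseqS m]
  have hFsmall : ∀ m a, ∀ t ∈ Set.Ici (1:ℝ), ‖Fm (m+1) a t‖ ≤ 2 * (1/2)^m := by
    intro m a t ht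
    rw [hFrec, norm_sub_rev]
    exact hGf3 (seq m) m a t ht
  have hGsmall : ∀ m a, ∀ t ∈ Set.Ici (1:ℝ), ‖Gm (m+1) a t‖ ≤ 5 * K * (1/2)^(m+1) := by
    intro m a t ht
    have hb : ∀ s ∈ Set.Ici (1:ℝ), ‖Fm (m+1) a s‖ ≤ 4 * (1/2)^(m+1) := by
      intro s hs
      calc ‖Fm (m+1) a s‖ ≤ 2 * (1/2)^m := hFsmall m a s hs
        _ = 4 * (1/2)^(m+1) := by rw [pow_succ]; ring
    calc ‖Gm (m+1) a t‖ ≤ K * (4 * (1/2)^(m+1) + (1/2)^(m+1)) :=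
          hGf4 (seq (m+1)) (m+1) a (4 * (1/2)^(m+1)) hb t ht
      _ = 5 * K * (1/2)^(m+1) := by ring
  have hgeo : Summable (fun m : ℕ => (1/2:ℝ)^m) :=
    summable_geometric_of_lt_one (by norm_num) (by norm_num)
  have hsummable : ∀ a, ∀ t ∈ Set.Ici (1:ℝ), Summable (fun m => Gm m a t) := by
    intro a t ht
    rw [← summable_nat_add_iff 1]
    apply Summable.of_norm_bounded ?_
      (fun m => hGsmall m a t ht)
    apply Summable.congr ((hgeo.mul_left (5*K*(1/2))))
    intro m
    rw [pow_succ]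
    ring
  set φb : ℝ → A → D := fun t a => ∑' m, Gm m a t with hφb
  have htail : ∀ (M : ℕ) a, ∀ t ∈ Set.Ici (1:ℝ),
      ‖φb t a - ∑ m ∈ Finset.range (M+1), Gm m a t‖ ≤ 10 * K * (1/2)^(M+1) := by
    intro M a t ht
    have hsum := hsummable a t ht
    have hsplit := Summable.sum_add_tsum_nat_add (f := fun m => Gm m a t) (M+1) hsum
    have e : φb t a - ∑ m ∈ Finset.range (M+1), Gm m a t = ∑' m, Gm (m + (M+1)) a t := by
      show (∑' m, Gm m a t) - _ = _
      rw [← hsplit]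
      abel
    have hb : ∀ m : ℕ, ‖Gm (m + (M+1)) a t‖ ≤ 5 * K * (1/2)^(m + (M+1)) := by
      intro m
      have hmm : m + (M+1) = (m + M) + 1 := by omega
      rw [hmm]
      exact hGsmall (m+M) a t ht
    have hsgeo : Summable (fun m : ℕ => 5 * K * (1/2:ℝ)^(m + (M+1))) := by
      apply Summable.congr (hgeo.mul_left (5*K*(1/2)^(M+1)))
      intro m
      rw [pow_add]
      ring
    have hsn : Summable (fun m : ℕ => ‖Gm (m + (M+1)) a t‖) :=
      Summable.of_nonneg_of_le (fun m => norm_nonneg _) hb hsgeo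
    rw [e]
    calc ‖∑' m, Gm (m + (M+1)) a t‖ ≤ ∑' m, ‖Gm (m + (M+1)) a t‖ :=
          norm_tsum_le_tsum_norm hsn
      _ ≤ ∑' m : ℕ, 5 * K * (1/2:ℝ)^(m + (M+1)) := Summable.tsum_le_tsum hb hsn hsgeo
      _ = 5 * K * (1/2)^(M+1) * ∑' m : ℕ, (1/2:ℝ)^m := by
          rw [← tsum_mul_left]
          apply tsum_congr
          intro m
          rw [pow_add]
          ring
      _ = 10 * K * (1/2)^(M+1) := by
          rw [tsum_geometric_of_lt_one (by norm_num) (by norm_num)]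
          norm_num
          ring
  have hM : ∀ ε : ℝ, 0 < ε → ∃ M : ℕ, 10 * K * (1/2:ℝ)^(M+1) < ε := by
    intro ε hε
    obtain ⟨n, hn⟩ := exists_pow_lt_of_lt_one (show (0:ℝ) < ε / (10*K) by positivity)
      (by norm_num : (1/2:ℝ) < 1)
    refine ⟨n, ?_⟩
    have hpow1 : (1/2:ℝ)^(n+1) ≤ (1/2)^n :=
      pow_le_pow_of_le_one (by norm_num) (by norm_num) (by omega)
    have hfs : 10 * K * (ε / (10*K)) = ε := by field_simp
    nlinarith [mul_le_mul_of_nonneg_left hpow1 (show (0:ℝ) ≤ 10*K by positivity),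
      mul_lt_mul_of_pos_left hn (show (0:ℝ) < 10*K by positivity)]
  refine ⟨φb, ?_, ?_, ?_, ?_⟩
  · -- exactness
    intro t ht a
    have hsum := hsummable a t ht
    have e1 : qL (φb t a) = ∑' m, qL (Gm m a t) := qL.map_tsum hsum
    have hqG : ∀ m, qL (Gm m a t) = Fm m a t - Fm (m+1) a t := by
      intro m
      rw [hFrec m a t]
      abel
    have hsq : Summable (fun m => qL (Gm m a t)) := hsum.map qL qL.continuous
    have htel : ∀ n, ∑ i ∈ Finset.range n, qL (Gm i a t) = F₀ a t - Fm n a t := by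
      intro n
      calc ∑ i ∈ Finset.range n, qL (Gm i a t)
          = ∑ i ∈ Finset.range n, (Fm i a t - Fm (i+1) a t) :=
            Finset.sum_congr rfl (fun i _ => hqG i)
        _ = Fm 0 a t - Fm n a t := Finset.sum_range_sub' (fun i => Fm i a t) n
        _ = F₀ a t - Fm n a t := by rw [hF0]
    have hlim : Tendsto (fun n => Fm n a t) atTop (𝓝 0) := by
      have hb : ∀ᶠ n in atTop, ‖Fm n a t‖ ≤ 4 * (1/2:ℝ)^n := by
        filter_upwards [Filter.eventually_ge_atTop 1] with n hn
        obtain ⟨m, rfl⟩ : ∃ m, n = m + 1 := ⟨n - 1, by omega⟩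
        calc ‖Fm (m+1) a t‖ ≤ 2 * (1/2)^m := hFsmall m a t ht
          _ = 4 * (1/2)^(m+1) := by rw [pow_succ]; ring
      have hg0 : Tendsto (fun n : ℕ => 4 * (1/2:ℝ)^n) atTop (𝓝 0) := by
        have := (tendsto_pow_atTop_nhds_zero_of_lt_one
          (by norm_num : (0:ℝ) ≤ 1/2) (by norm_num)).const_mul (4:ℝ)
        simpa using this
      exact squeeze_zero_norm' hb hg0
    have htend : Tendsto (fun n => ∑ i ∈ Finset.range n, qL (Gm i a t)) atTop (𝓝 (F₀ a t)) := by
      have h' : Tendsto (fun n => F₀ a t - Fm n a t) atTop (𝓝 (F₀ a t - 0)) :=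
        tendsto_const_nhds.sub hlim
      simp only [sub_zero] at h'
      exact (tendsto_congr (fun n => (htel n).symm)).1 h'
    rw [e1, tendsto_nhds_unique hsq.hasSum.tendsto_sum_nat htend]
  · -- equicontinuity
    intro a ε hε
    obtain ⟨M, hMlt⟩ := hM (ε/4) (by positivity)
    set Nr : ℝ := (M:ℝ) + 1 with hNr
    have hNrpos : 0 < Nr := by positivity
    obtain ⟨δ, hδpos, hδ'⟩ := MTaux_finset_delta (Finset.range (M+1))
      (fun m δ => ∀ b, dist b a < δ → ∀ t ∈ Set.Ici (1:ℝ),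
        ‖Gm m b t - Gm m a t‖ ≤ ε / (4*Nr))
      (fun m _ => hGf2 (seq m) m a (ε/(4*Nr)) (by positivity))
      (fun m _ δ δ' hδ'pos hle h b hb t ht => h b (lt_of_lt_of_le hb hle) t ht)
    refine ⟨δ, hδpos, ?_⟩
    intro b hb t ht
    have htb := htail M b t ht
    have hta := htail M a t ht
    have hsumdiff : ‖∑ m ∈ Finset.range (M+1), Gm m b t
        - ∑ m ∈ Finset.range (M+1), Gm m a t‖ ≤ ε/4 := by
      rw [← Finset.sum_sub_distrib]
      calc ‖∑ m ∈ Finset.range (M+1), (Gm m b t - Gm m a t)‖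
          ≤ ∑ m ∈ Finset.range (M+1), ‖Gm m b t - Gm m a t‖ := norm_sum_le _ _
        _ ≤ ∑ _m ∈ Finset.range (M+1), ε/(4*Nr) :=
            Finset.sum_le_sum (fun m hm => hδ' m hm b hb t ht)
        _ = ε/4 := by
            rw [Finset.sum_const, Finset.card_range, nsmul_eq_mul]
            rw [hNr]
            push_cast
            field_simp
    have e : φb t b - φb t a
        = ((φb t b - ∑ m ∈ Finset.range (M+1), Gm m b t)
          - (φb t a - ∑ m ∈ Finset.range (M+1), Gm m a t))
          + (∑ m ∈ Finset.range (M+1), Gm m b t - ∑ m ∈ Finset.range (M+1), Gm m a t) := by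
      abel
    calc ‖φb t b - φb t a‖
        ≤ ‖(φb t b - ∑ m ∈ Finset.range (M+1), Gm m b t)
            - (φb t a - ∑ m ∈ Finset.range (M+1), Gm m a t)‖
          + ‖∑ m ∈ Finset.range (M+1), Gm m b t - ∑ m ∈ Finset.range (M+1), Gm m a t‖ := by
          rw [e]; exact norm_add_le _ _
      _ ≤ (‖φb t b - ∑ m ∈ Finset.range (M+1), Gm m b t‖
            + ‖φb t a - ∑ m ∈ Finset.range (M+1), Gm m a t‖) + ε/4 :=
          add_le_add (norm_sub_le _ _) hsumdiff
      _ ≤ (10*K*(1/2)^(M+1) + 10*K*(1/2)^(M+1)) + ε/4 :=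
          add_le_add (add_le_add htb hta) le_rfl
      _ ≤ ε := by linarith
  · -- uniform continuity in t
    intro a
    rw [Metric.uniformContinuousOn_iff]
    intro ε hε
    obtain ⟨M, hMlt⟩ := hM (ε/4) (by positivity)
    have hP : UniformContinuousOn (fun t => ∑ m ∈ Finset.range (M+1), Gm m a t)
        (Set.Ici 1) := MTaux_ucOn_sum _ _ (fun m _ => hGf1 (seq m) m a)
    obtain ⟨δ, hδpos, hδ'⟩ := Metric.uniformContinuousOn_iff.1 hP (ε/4) (by positivity)
    refine ⟨δ, hδpos, ?_⟩
    intro x hx y hy hxy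
    have e1 : dist (φb x a) (∑ m ∈ Finset.range (M+1), Gm m a x) ≤ 10*K*(1/2)^(M+1) := by
      rw [dist_eq_norm]
      exact htail M a x hx
    have e2 : dist (∑ m ∈ Finset.range (M+1), Gm m a y) (φb y a) ≤ 10*K*(1/2)^(M+1) := by
      rw [dist_eq_norm, norm_sub_rev]
      exact htail M a y hy
    have e3 := hδ' x hx y hy hxy
    calc dist (φb x a) (φb y a)
        ≤ dist (φb x a) (∑ m ∈ Finset.range (M+1), Gm m a x)
          + dist (∑ m ∈ Finset.range (M+1), Gm m a x) (∑ m ∈ Finset.range (M+1), Gm m a y)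
          + dist (∑ m ∈ Finset.range (M+1), Gm m a y) (φb y a) := dist_triangle4 _ _ _ _
      _ < ε := by linarith
  · -- pointwise bound
    intro a
    obtain ⟨B, hB⟩ := h3 a
    refine ⟨K * (B + 1) + 10 * K * (1/2:ℝ)^(0+1), ?_⟩
    intro t ht
    have hb1 := htail 0 a t ht
    have hb2 : ‖Gm 0 a t‖ ≤ K * (B + 1) := by
      have hbb : ∀ s ∈ Set.Ici (1:ℝ), ‖Fm 0 a s‖ ≤ B := by
        intro s hs
        rw [hF0]
        exact hB s hs
      have := hGf4 (seq 0) 0 a B hbb t ht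
      simpa using this
    have e : φb t a = (φb t a - ∑ m ∈ Finset.range 1, Gm m a t) + Gm 0 a t := by
      rw [Finset.sum_range_one]; abel
    calc ‖φb t a‖ = ‖(φb t a - ∑ m ∈ Finset.range 1, Gm m a t) + Gm 0 a t‖ := by rw [← e]
      _ ≤ ‖φb t a - ∑ m ∈ Finset.range 1, Gm m a t‖ + ‖Gm 0 a t‖ := norm_add_le _ _
      _ ≤ 10*K*(1/2)^(0+1) + K*(B+1) := add_le_add (htail 0 a t ht) hb2
      _ = K*(B+1) + 10*K*(1/2)^(0+1) := by ring

/-- An asymptotic homomorphism between C*-algebras. -/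
structure AsymptoticHom (A B : Type*) [NonUnitalCStarAlgebra A] [NonUnitalCStarAlgebra B] where
  toFun : ℝ → A → B
  continuous' : ∀ a : A, ContinuousOn (fun t => toFun t a) (Set.Ici (1 : ℝ))
  add_lim : ∀ a b : A,
    Tendsto (fun t => toFun t (a + b) - toFun t a - toFun t b) atTop (𝓝 0)
  smul_lim : ∀ (z : ℂ) (a : A),
    Tendsto (fun t => toFun t (z • a) - z • toFun t a) atTop (𝓝 0)
  mul_lim : ∀ a b : A,
    Tendsto (fun t => toFun t (a * b) - toFun t a * toFun t b) atTop (𝓝 0)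
  star_lim : ∀ a : A,
    Tendsto (fun t => toFun t (star a) - star (toFun t a)) atTop (𝓝 0)

/-- Lemma on uniformly continuous lifts: given a surjective morphism `q : D → C` of
C*-algebras whose kernel (the ideal `D₀`) is σ-unital, a separable `A`, and a uniformly
continuous equi-continuous asymptotic homomorphism `φ : A → C = D/D₀` which admits an
equi-continuous bounded set-theoretic lift (Lemma 2.1 of Manuilov–Thomsen, taken as a
hypothesis), there is a lift `φ̄ : A → D` of `φ` which is equi-continuous, uniformly
continuous in `t`, and pointwise bounded. -/
theorem exists_uniformly_continuous_lift
    (A D C : Type*) [NonUnitalCStarAlgebra A] [NonUnitalCStarAlgebra C]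
    [NonUnitalCStarAlgebra D] [TopologicalSpace.SeparableSpace A]
    (q : D →⋆ₙₐ[ℂ] C) (hq : Function.Surjective q)
    -- the kernel ideal `D₀ = ker q` is σ-unital: it has a countable approximate unit
    (hσ : ∃ e : ℕ → D, (∀ n, q (e n) = 0) ∧
      ∀ d : D, q d = 0 → Tendsto (fun n => ‖e n * d - d‖) atTop (𝓝 0))
    (φ : AsymptoticHom A C)
    (hequi : Equicontinuous fun t : Set.Ici (1:ℝ) => φ.toFun t)
    (hunif : ∀ a : A, UniformContinuousOn (fun t => φ.toFun t a) (Set.Ici 1))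
    -- black box (Lemma 2.1 of Manuilov–Thomsen): an equi-continuous bounded lift exists
    (hlift : ∃ ψ : ℝ → A → D,
      Equicontinuous (fun t : Set.Ici (1:ℝ) => ψ t) ∧
      (∀ t ∈ Set.Ici (1:ℝ), ∀ a, q (ψ t a) = φ.toFun t a) ∧
      (∀ a, ∃ M : ℝ, ∀ t ∈ Set.Ici (1:ℝ), ‖ψ t a‖ ≤ M)) :
    ∃ φbar : ℝ → A → D,
      (∀ t ∈ Set.Ici (1:ℝ), ∀ a, q (φbar t a) = φ.toFun t a) ∧
      Equicontinuous (fun t : Set.Ici (1:ℝ) => φbar t) ∧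
      (∀ a, UniformContinuousOn (fun t => φbar t a) (Set.Ici 1)) ∧
      (∀ a, ∃ M : ℝ, ∀ t ∈ Set.Ici (1:ℝ), ‖φbar t a‖ ≤ M) := by
  classical
  obtain ⟨ψ, hψequi, hψlift, hψbd⟩ := hlift
  let qlin : D →ₗ[ℂ] C :=
    { toFun := ⇑q, map_add' := fun x y => map_add q x y,
      map_smul' := fun c x => map_smul q c x }
  let qL : D →L[ℂ] C := qlin.mkContinuous 1 (fun x => by
    rw [one_mul]; exact NonUnitalStarAlgHom.norm_apply_le q x)
  have hqL : ∀ x : D, qL x = q x := fun _ => rfl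
  obtain ⟨K, hKpos, hK⟩ := ContinuousLinearMap.exists_preimage_norm_le qL (fun c => hq c)
  have h1 : ∀ a : A, UniformContinuousOn
      ((fun a t => φ.toFun t a) a) (Set.Ici 1) := fun a => hunif a
  have h2 : ∀ a : A, ∀ ε > (0:ℝ), ∃ δ > (0:ℝ), ∀ b, dist b a < δ →
      ∀ t ∈ Set.Ici (1:ℝ), ‖φ.toFun t b - φ.toFun t a‖ ≤ ε := by
    intro a ε hε
    obtain ⟨δ, hδ, H⟩ := Metric.equicontinuousAt_iff.1 (hequi a) ε hε
    refine ⟨δ, hδ, ?_⟩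
    intro b hb t ht
    have := H b hb ⟨t, ht⟩
    rw [dist_eq_norm] at this
    calc ‖φ.toFun t b - φ.toFun t a‖ = ‖φ.toFun t a - φ.toFun t b‖ := norm_sub_rev _ _
      _ ≤ ε := le_of_lt this
  have h3 : ∀ a : A, ∃ B : ℝ, ∀ t ∈ Set.Ici (1:ℝ), ‖φ.toFun t a‖ ≤ B := by
    intro a
    obtain ⟨M, hM⟩ := hψbd a
    refine ⟨M, fun t ht => ?_⟩
    calc ‖φ.toFun t a‖ = ‖q (ψ t a)‖ := by rw [hψlift t ht a]
      _ ≤ ‖ψ t a‖ := NonUnitalStarAlgHom.norm_apply_le q _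
      _ ≤ M := hM t ht
  obtain ⟨φbar, hexact, hequi', hUC', hbd'⟩ :=
    MTaux_main qL K hKpos hK (fun a t => φ.toFun t a) h1 h2 h3
  refine ⟨φbar, ?_, ?_, hUC', hbd'⟩
  · intro t ht a
    have := hexact t ht a
    rw [hqL] at this
    exact this
  · intro a
    rw [Metric.equicontinuousAt_iff]
    intro ε hε
    obtain ⟨δ, hδ, H⟩ := hequi' a (ε/2) (by positivity)
    refine ⟨δ, hδ, ?_⟩
    intro b hb i
    have := H b hb i i.2
    calc dist (φbar (↑i) a) (φbar (↑i) b) = ‖φbar (↑i) b - φbar (↑i) a‖ := by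
          rw [dist_eq_norm, norm_sub_rev]
      _ ≤ ε/2 := this
      _ < ε := by linarith
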